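/- Let G be a group and H a proper subgroup of finite index in G. Then there exists an element x ∈ G such that x·g·H ≠ g·H for every g ∈ G; that is, the permutation of the left coset space G/H induced by left multiplication by x has no fixed point. -/

import Mathlib

open Pointwise


/-- Let `G` be a group and `H` a proper subgroup of finite index in `G`. Then
there exists `x ∈ G` such that `x • gH ≠ gH` for every `g ∈ G`: the permutation of the left
coset space `G ⧸ H` induced by left multiplication by `x` has no fixed point. -/
theorem exists_fixed_point_free_left_mul_on_cosets {G : Type*} [Group G] (H : Subgroup G)
    (hH : H ≠ ⊤) (hfin : Finite (G ⧸ H)) :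
    ∃ x : G, ∀ g : G, ((x * g : G) : G ⧸ H) ≠ (g : G ⧸ H) := by
  classical
  by_contra hcon
  push_neg at hcon
  -- translate: every x lies in some conjugate of H
  have hmem : ∀ x : G, ∃ g : G, g⁻¹ * x * g ∈ H := by
    intro x
    obtain ⟨g, hg⟩ := hcon x
    refine ⟨g, ?_⟩
    have h1 : g⁻¹ * x⁻¹ * g ∈ H := by
      simpa [mul_assoc] using (QuotientGroup.eq (s := H) (a := x * g) (b := g)).mp hg
    have h2 := H.inv_mem h1
    convert h2 using 1
    group
  set N := Subgroup.normalizer (H : Set G) with hN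
  have hle : H ≤ N := Subgroup.le_normalizer
  have hI : H.index ≠ 0 := Subgroup.index_ne_zero_of_finite
  have hfiH : H.FiniteIndex := ⟨hI⟩
  have hfiN : N.FiniteIndex := Subgroup.finiteIndex_of_le hle
  have hfinN : Finite (G ⧸ N) := Subgroup.finite_quotient_of_finiteIndex (H := N)
  -- the conjugate subgroups, indexed by G ⧸ N
  let K : G → Subgroup G := fun g => H.comap (MulAut.conj g⁻¹).toMonoidHom
  have hKmem : ∀ g x : G, x ∈ K g ↔ g⁻¹ * x * g ∈ H := by
    intro g x
    simp [K, MulAut.conj_apply, mul_assoc]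
  have hKwd : ∀ g g' : G, g⁻¹ * g' ∈ N → K g = K g' := by
    intro g g' hn
    ext x
    rw [hKmem, hKmem]
    have h2 := Subgroup.mem_normalizer_iff.mp ((Subgroup.normalizer (H : Set G)).inv_mem hn) (g⁻¹ * x * g)
    have key : (g⁻¹ * g')⁻¹ * (g⁻¹ * x * g) * ((g⁻¹ * g')⁻¹)⁻¹ = g'⁻¹ * x * g' := by
      group
    rw [h2, key]
  have hKindex : ∀ g : G, (K g).index = H.index := fun g =>
    Subgroup.index_comap_of_surjective _ (MulAut.conj g⁻¹).surjective
  have : Fintype (G ⧸ N) := Fintype.ofFinite _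
  -- covering of G by the conjugates
  have hcovers : ⋃ q ∈ (Finset.univ : Finset (G ⧸ N)),
      (1 : G) • ((K (Quotient.out q) : Set G)) = Set.univ := by
    apply Set.eq_univ_of_forall
    intro x
    obtain ⟨g, hg⟩ := hmem x
    have hx : x ∈ K g := (hKmem g x).mpr hg
    refine Set.mem_iUnion₂.mpr ⟨QuotientGroup.mk g, Finset.mem_univ _, ?_⟩
    have hout : (QuotientGroup.mk (Quotient.out (QuotientGroup.mk g : G ⧸ N)) : G ⧸ N)
        = QuotientGroup.mk g := Quotient.out_eq _
    have hn : g⁻¹ * Quotient.out (QuotientGroup.mk g : G ⧸ N) ∈ N :=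
      (QuotientGroup.eq (s := N)).mp hout.symm
    rw [one_smul, ← hKwd g _ hn]
    exact hx
  -- sum of inverse indexes
  have hsum := Subgroup.one_le_sum_inv_index_of_leftCoset_cover hcovers
  have hsum' : ∑ q ∈ (Finset.univ : Finset (G ⧸ N)),
      ((K (Quotient.out q)).index : ℚ)⁻¹ = (Nat.card (G ⧸ N) : ℚ) / (H.index : ℚ) := by
    rw [Finset.sum_congr rfl (fun q _ => by rw [hKindex])]
    simp [Finset.card_univ, Nat.card_eq_fintype_card, div_eq_mul_inv]
  have hNindex : N.index = Nat.card (G ⧸ N) := rfl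
  have hrel : H.relIndex N * N.index = H.index := Subgroup.relIndex_mul_index hle
  -- N.index ≤ H.index, with equality iff relindex = 1
  have hposI : (0:ℚ) < (H.index : ℚ) := by exact_mod_cast Nat.pos_of_ne_zero hI
  have hdvd : N.index ∣ H.index := ⟨H.relIndex N, by rw [← hrel, mul_comm]⟩
  have hsumle : (Nat.card (G ⧸ N) : ℚ) / (H.index : ℚ) ≤ 1 := by
    rw [div_le_one hposI]
    exact_mod_cast Nat.le_of_dvd (Nat.pos_of_ne_zero hI) (hNindex ▸ hdvd)
  have hsum1 : ∑ q ∈ (Finset.univ : Finset (G ⧸ N)),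
      ((K (Quotient.out q)).index : ℚ)⁻¹ = 1 := by
    rw [hsum']
    rw [hsum'] at hsum
    linarith
  -- hence [G:N] = [G:H] and so N = H
  have hcard : (Nat.card (G ⧸ N) : ℚ) = (H.index : ℚ) := by
    have := hsum1
    rw [hsum', div_eq_one_iff_eq (ne_of_gt hposI)] at this
    exact this
  have hNH : N.index = H.index := by exact_mod_cast hNindex ▸ hcard
  have hrel1 : H.relIndex N = 1 := by
    have hN0 : N.index ≠ 0 := by rw [hNH]; exact hI
    have h3 := hrel
    rw [hNH] at h3
    exact Nat.eq_of_mul_eq_mul_right (Nat.pos_of_ne_zero hI)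
      (by rw [one_mul]; exact h3)
  have hNeqH : N = H := le_antisymm (Subgroup.relIndex_eq_one.mp hrel1) hle
  -- G ⧸ N is nontrivial
  have hIne1 : H.index ≠ 1 := fun h => hH (Subgroup.index_eq_one.mp h)
  have hnontriv : Nontrivial (G ⧸ N) := by
    rw [← Finite.one_lt_card_iff_nontrivial]
    rw [← hNindex, hNH]
    omega
  obtain ⟨q₁, q₂, hne⟩ := hnontriv
  -- pairwise disjointness contradicts 1 lying in every conjugate
  have hdisj := Subgroup.pairwiseDisjoint_leftCoset_cover_of_sum_inv_index_eq_one
    hcovers hsum1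
  have hfi : ∀ q : G ⧸ N, (K (Quotient.out q)).FiniteIndex :=
    fun q => ⟨by rw [hKindex]; exact hI⟩
  have hm : ∀ q : G ⧸ N, q ∈ (Finset.univ : Finset (G ⧸ N)).filter
      (fun q => (K (Quotient.out q)).FiniteIndex) :=
    fun q => Finset.mem_filter.mpr ⟨Finset.mem_univ _, hfi q⟩
  have hd := hdisj (hm q₁) (hm q₂) hne
  have h1 : ∀ q : G ⧸ N, (1 : G) ∈ (1 : G) • (K (Quotient.out q) : Set G) := by
    intro q
    rw [one_smul]
    exact (K (Quotient.out q)).one_mem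
  exact Set.disjoint_left.mp hd (h1 q₁) (h1 q₂)
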